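/- Fix x̌, x̂ ∈ ℝⁿ with x̌⁽ˡ⁾ ≤ x̂⁽ˡ⁾ for every l, and let g be the associated erf-product function. Then for every nonempty finite set V ⊆ ℝⁿ and every z in the convex hull of V, there exists v ∈ V with g(v) ≤ g(z); i.e., the minimum of g over conv(V) equals the minimum of g over V. -/

import Mathlib

/-- The Gauss error function `erf x = (2/√π) ∫₀ˣ exp (−t²) dt`. -/
noncomputable def erf (x : ℝ) : ℝ :=
  (2 / Real.sqrt Real.pi) * ∫ t in (0:ℝ)..x, Real.exp (-t ^ 2)

/-- The erf-product function
`g z = 2⁻ⁿ ∏ₗ (erf((zₗ − x̌ₗ)/√2) − erf((zₗ − x̂ₗ)/√2))`. -/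
noncomputable def gerf {n : ℕ} (xlo xhi : Fin n → ℝ) (z : Fin n → ℝ) : ℝ :=
  (1 / 2 : ℝ) ^ n *
    ∏ l, (erf ((z l - xlo l) / Real.sqrt 2) - erf ((z l - xhi l) / Real.sqrt 2))

lemma gauss_cont : Continuous fun t : ℝ => Real.exp (-t ^ 2) := by continuity

lemma erf_hasDerivAt (x : ℝ) :
    HasDerivAt erf ((2 / Real.sqrt Real.pi) * Real.exp (-x ^ 2)) x := by
  have h := intervalIntegral.integral_hasDerivAt_right
    (gauss_cont.intervalIntegrable 0 x)
    (gauss_cont.stronglyMeasurableAtFilter _ _) gauss_cont.continuousAt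
  exact h.const_mul _

lemma erf_sub_eq (x y : ℝ) :
    erf x - erf y = (2 / Real.sqrt Real.pi) * ∫ t in y..x, Real.exp (-t ^ 2) := by
  unfold erf
  rw [← mul_sub, intervalIntegral.integral_interval_sub_left
    (gauss_cont.intervalIntegrable _ _) (gauss_cont.intervalIntegrable _ _)]

noncomputable def hfac (a b t : ℝ) : ℝ :=
  erf ((t - a) / Real.sqrt 2) - erf ((t - b) / Real.sqrt 2)

lemma sqrt_pi_pos : (0:ℝ) < Real.sqrt Real.pi := Real.sqrt_pos.2 Real.pi_pos

lemma hfac_pos {a b : ℝ} (hab : a < b) (t : ℝ) : 0 < hfac a b t := by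
  have h2 : (0:ℝ) < Real.sqrt 2 := Real.sqrt_pos.2 (by norm_num)
  have hlt : (t - b) / Real.sqrt 2 < (t - a) / Real.sqrt 2 := by
    have : t - b < t - a := by linarith
    gcongr
  rw [hfac, erf_sub_eq]
  apply mul_pos (by positivity)
  exact intervalIntegral.intervalIntegral_pos_of_pos_on (gauss_cont.intervalIntegrable _ _)
    (fun x _ => Real.exp_pos _) hlt

noncomputable def hfac1 (a b t : ℝ) : ℝ :=
  2 / Real.sqrt Real.pi / Real.sqrt 2 *
    (Real.exp (-((t - a) / Real.sqrt 2) ^ 2) - Real.exp (-((t - b) / Real.sqrt 2) ^ 2))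

noncomputable def hfac2 (a b t : ℝ) : ℝ :=
  2 / Real.sqrt Real.pi *
    ((t - b) / Real.sqrt 2 * Real.exp (-((t - b) / Real.sqrt 2) ^ 2) -
     (t - a) / Real.sqrt 2 * Real.exp (-((t - a) / Real.sqrt 2) ^ 2))

lemma inner_hasDerivAt (a t : ℝ) :
    HasDerivAt (fun t : ℝ => (t - a) / Real.sqrt 2) (1 / Real.sqrt 2) t :=
  ((hasDerivAt_id t).sub_const a).div_const _

lemma hfac_hasDerivAt (a b t : ℝ) : HasDerivAt (hfac a b) (hfac1 a b t) t := by
  have ha := (erf_hasDerivAt ((t - a) / Real.sqrt 2)).comp t (inner_hasDerivAt a t)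
  have hb := (erf_hasDerivAt ((t - b) / Real.sqrt 2)).comp t (inner_hasDerivAt b t)
  have := ha.sub hb
  refine this.congr_deriv (Eq.symm ?_)
  unfold hfac1
  ring

lemma hfac1_hasDerivAt (a b t : ℝ) : HasDerivAt (hfac1 a b) (hfac2 a b t) t := by
  have key : ∀ c : ℝ, HasDerivAt (fun t : ℝ => Real.exp (-((t - c) / Real.sqrt 2) ^ 2))
      (Real.exp (-((t - c) / Real.sqrt 2) ^ 2) *
        (-(2 * ((t - c) / Real.sqrt 2)) * (1 / Real.sqrt 2))) t := by
    intro c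
    have h1 : HasDerivAt (fun t : ℝ => -((t - c) / Real.sqrt 2) ^ 2)
        (-(2 * ((t - c) / Real.sqrt 2)) * (1 / Real.sqrt 2)) t := by
      have := ((inner_hasDerivAt c t).pow 2).neg
      refine this.congr_deriv (Eq.symm ?_)
      ring
    exact h1.exp
  have := ((key a).sub (key b)).const_mul (2 / Real.sqrt Real.pi / Real.sqrt 2)
  refine this.congr_deriv (Eq.symm ?_)
  have hs : Real.sqrt 2 * Real.sqrt 2 = 2 := Real.mul_self_sqrt (by norm_num)
  have hs0 : Real.sqrt 2 ≠ 0 := by positivity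
  unfold hfac2
  field_simp
  rw [Real.sq_sqrt (by norm_num : (0:ℝ) ≤ 2)]
  ring

lemma ftc_gauss' (α β : ℝ) :
    ∫ x in α..β, 2 * x * Real.exp (-x ^ 2)
      = Real.exp (-α ^ 2) - Real.exp (-β ^ 2) := by
  have h : ∀ x : ℝ, HasDerivAt (fun y : ℝ => -Real.exp (-y ^ 2))
      (2 * x * Real.exp (-x ^ 2)) x := by
    intro x
    have h1 : HasDerivAt (fun y : ℝ => -y ^ 2) (-(2 * x)) x := by
      exact (hasDerivAt_pow 2 x).neg.congr_deriv (by norm_num)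
    have := (h1.exp).neg
    refine this.congr_deriv (Eq.symm ?_)
    ring
  have hint : IntervalIntegrable (fun x => 2 * x * Real.exp (-x ^ 2)) MeasureTheory.volume α β :=
    ((continuous_const.mul continuous_id).mul gauss_cont).intervalIntegrable _ _
  rw [intervalIntegral.integral_eq_sub_of_hasDerivAt (fun x _ => h x) hint]
  ring

lemma key_ineq (α β : ℝ) (hab : α ≤ β) :
    (α * Real.exp (-α ^ 2) - β * Real.exp (-β ^ 2)) * ∫ x in α..β, Real.exp (-x ^ 2)
      ≤ (1 / 2) * (Real.exp (-α ^ 2) - Real.exp (-β ^ 2)) ^ 2 := by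
  set I := ∫ x in α..β, Real.exp (-x ^ 2) with hI
  set P := α * Real.exp (-α ^ 2) - β * Real.exp (-β ^ 2) with hP
  have hInonneg : 0 ≤ I := by
    apply intervalIntegral.integral_nonneg hab
    intro x _; positivity
  rcases le_or_gt P 0 with hP0 | hP0
  · have : P * I ≤ 0 := mul_nonpos_of_nonpos_of_nonneg hP0 hInonneg
    nlinarith [sq_nonneg (Real.exp (-α ^ 2) - Real.exp (-β ^ 2))]
  · have hcase : 0 < α ∨ β < 0 := by
      by_contra hcon
      push_neg at hcon
      obtain ⟨h1, h2⟩ := hcon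
      have : α * Real.exp (-α ^ 2) ≤ 0 :=
        mul_nonpos_of_nonpos_of_nonneg h1 (Real.exp_pos _).le
      have : 0 ≤ β * Real.exp (-β ^ 2) := mul_nonneg h2 (Real.exp_pos _).le
      nlinarith
    have hcont2 : Continuous fun x : ℝ => 2 * x * Real.exp (-x ^ 2) :=
      (continuous_const.mul continuous_id).mul gauss_cont
    have hmono : ∀ (c : ℝ), (∀ x ∈ Set.Icc α β, c * Real.exp (-x ^ 2) ≤ 2 * x * Real.exp (-x ^ 2)) →
        c * I ≤ Real.exp (-α ^ 2) - Real.exp (-β ^ 2) := by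
      intro c hc
      rw [← ftc_gauss' α β, hI, ← intervalIntegral.integral_const_mul]
      exact intervalIntegral.integral_mono_on hab
        ((continuous_const.mul gauss_cont).intervalIntegrable _ _)
        (hcont2.intervalIntegrable _ _) hc
    have hmono' : ∀ (c : ℝ), (∀ x ∈ Set.Icc α β, 2 * x * Real.exp (-x ^ 2) ≤ c * Real.exp (-x ^ 2)) →
        Real.exp (-α ^ 2) - Real.exp (-β ^ 2) ≤ c * I := by
      intro c hc
      rw [← ftc_gauss' α β, hI, ← intervalIntegral.integral_const_mul]
      exact intervalIntegral.integral_mono_on hab (hcont2.intervalIntegrable _ _)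
        ((continuous_const.mul gauss_cont).intervalIntegrable _ _) hc
    rcases hcase with hα | hβ
    · have h1 : 2 * α * I ≤ Real.exp (-α ^ 2) - Real.exp (-β ^ 2) := by
        apply hmono
        intro x hx
        have := hx.1
        have hex := (Real.exp_pos (-x ^ 2)).le
        nlinarith
      have h2 : P ≤ α * (Real.exp (-α ^ 2) - Real.exp (-β ^ 2)) := by
        have : α * Real.exp (-β ^ 2) ≤ β * Real.exp (-β ^ 2) :=
          mul_le_mul_of_nonneg_right hab (Real.exp_pos _).le
        rw [hP]; nlinarith
      nlinarith [mul_nonneg hInonneg hα.le, mul_pos hP0 hα]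
    · have h1 : Real.exp (-α ^ 2) - Real.exp (-β ^ 2) ≤ 2 * β * I := by
        apply hmono'
        intro x hx
        have := hx.2
        have hex := (Real.exp_pos (-x ^ 2)).le
        nlinarith
      have h2 : P ≤ β * (Real.exp (-α ^ 2) - Real.exp (-β ^ 2)) := by
        have : α * Real.exp (-α ^ 2) ≤ β * Real.exp (-α ^ 2) :=
          mul_le_mul_of_nonneg_right hab (Real.exp_pos _).le
        rw [hP]; nlinarith
      nlinarith [mul_nonneg hInonneg (neg_nonneg.2 hβ.le), mul_pos hP0 (neg_pos.2 hβ)]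

lemma hfac_second_le {a b : ℝ} (hab : a < b) (t : ℝ) :
    hfac2 a b t * hfac a b t ≤ hfac1 a b t * hfac1 a b t := by
  set α := (t - b) / Real.sqrt 2 with hα
  set β := (t - a) / Real.sqrt 2 with hβ
  have h2 : (0:ℝ) < Real.sqrt 2 := Real.sqrt_pos.2 (by norm_num)
  have hαβ : α ≤ β := by
    rw [hα, hβ]
    have : t - b ≤ t - a := by linarith
    gcongr
  have hint : hfac a b t = (2 / Real.sqrt Real.pi) * ∫ x in α..β, Real.exp (-x ^ 2) :=
    erf_sub_eq _ _
  have hK : (0:ℝ) < 2 / Real.sqrt Real.pi := by positivity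
  have key := key_ineq α β hαβ
  have hs : Real.sqrt 2 * Real.sqrt 2 = 2 := Real.mul_self_sqrt (by norm_num)
  rw [hint]
  unfold hfac1 hfac2
  rw [← hα, ← hβ]
  set I := ∫ x in α..β, Real.exp (-x ^ 2)
  set K := 2 / Real.sqrt Real.pi
  have expand : K / Real.sqrt 2 * (Real.exp (-β ^ 2) - Real.exp (-α ^ 2)) *
      (K / Real.sqrt 2 * (Real.exp (-β ^ 2) - Real.exp (-α ^ 2)))
      = K * K * ((1/2) * (Real.exp (-α ^ 2) - Real.exp (-β ^ 2)) ^ 2) := by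
    field_simp
    rw [Real.sq_sqrt (by norm_num : (0:ℝ) ≤ 2)]
    ring
  rw [expand]
  have lhs_eq : K * (α * Real.exp (-α ^ 2) - β * Real.exp (-β ^ 2)) * (K * I)
      = K * K * ((α * Real.exp (-α ^ 2) - β * Real.exp (-β ^ 2)) * I) := by ring
  rw [lhs_eq]
  exact mul_le_mul_of_nonneg_left key (by positivity)

lemma log_hfac_concaveOn {a b : ℝ} (hab : a < b) :
    ConcaveOn ℝ Set.univ (fun t => Real.log (hfac a b t)) := by
  have hpos := hfac_pos hab
  apply concaveOn_of_hasDerivWithinAt2_nonpos (f' := fun t => hfac1 a b t / hfac a b t)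
    (f'' := fun t => (hfac2 a b t * hfac a b t - hfac1 a b t * hfac1 a b t) / hfac a b t ^ 2)
    convex_univ
  · intro x _
    exact (((hfac_hasDerivAt a b x).log (hpos x).ne')).continuousAt.continuousWithinAt
  · intro x _
    exact ((hfac_hasDerivAt a b x).log (hpos x).ne').hasDerivWithinAt
  · intro x _
    exact (((hfac1_hasDerivAt a b x).div (hfac_hasDerivAt a b x) (hpos x).ne')).hasDerivWithinAt
  · intro x _
    apply div_nonpos_of_nonpos_of_nonneg
    · exact sub_nonpos.2 (hfac_second_le hab x)
    · positivity


lemma concaveOn_finset_sum {ι : Type*} {E : Type*} [AddCommGroup E] [Module ℝ E]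
    (s : Finset ι) (f : ι → E → ℝ) (h : ∀ i ∈ s, ConcaveOn ℝ Set.univ (f i)) :
    ConcaveOn ℝ Set.univ (fun x => ∑ i ∈ s, f i x) := by
  induction s using Finset.cons_induction with
  | empty => simpa using concaveOn_const (0:ℝ) convex_univ
  | cons a s ha ih =>
    simp only [Finset.sum_cons]
    exact (h a (Finset.mem_cons_self a s)).add
      (ih fun i hi => h i (Finset.mem_cons_of_mem hi))


/-- Lemma 1: the minimum of the erf-product function `g` over the convex
hull of a finite set `V` is attained at one of the points of `V`. -/
theorem gerf_min_on_convexHull_attained_at_points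
    {n : ℕ} (xlo xhi : Fin n → ℝ) (hx : ∀ l, xlo l ≤ xhi l)
    (V : Finset (Fin n → ℝ)) (hV : V.Nonempty) :
    ∀ z ∈ convexHull ℝ (V : Set (Fin n → ℝ)), ∃ v ∈ V,
      gerf xlo xhi v ≤ gerf xlo xhi z := by
  intro z hz
  by_cases hstrict : ∀ l, xlo l < xhi l
  · set F := fun w : Fin n → ℝ => ∑ l, Real.log (hfac (xlo l) (xhi l) (w l)) with hF
    have hconc : ConcaveOn ℝ Set.univ F := by
      apply concaveOn_finset_sum
      intro l _
      have := (log_hfac_concaveOn (hstrict l)).comp_linearMap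
        (LinearMap.proj (R := ℝ) (φ := fun _ : Fin n => ℝ) l)
      exact this
    obtain ⟨v, hvV, hle⟩ := hconc.exists_le_of_mem_convexHull (Set.subset_univ _) hz
    refine ⟨v, hvV, ?_⟩
    have gform : ∀ w : Fin n → ℝ, gerf xlo xhi w = (1/2:ℝ)^n * Real.exp (F w) := by
      intro w
      unfold gerf
      congr 1
      rw [hF, Real.exp_sum]
      refine Finset.prod_congr rfl fun l _ => ?_
      rw [Real.exp_log (hfac_pos (hstrict l) (w l))]
      rfl
    rw [gform, gform]
    exact mul_le_mul_of_nonneg_left (Real.exp_le_exp.2 hle) (by positivity)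
  · push_neg at hstrict
    obtain ⟨l, hl⟩ := hstrict
    have heq : xlo l = xhi l := le_antisymm (hx l) hl
    have gzero : ∀ w : Fin n → ℝ, gerf xlo xhi w = 0 := by
      intro w
      unfold gerf
      rw [Finset.prod_eq_zero (Finset.mem_univ l) (by rw [heq]; ring)]
      ring
    obtain ⟨v, hv⟩ := hV
    exact ⟨v, hv, by rw [gzero, gzero]⟩
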